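/- Let T : ℝ → ℝ be a concave function, and let G : ℝ × ℝ → ℝ be a concave function such that t ↦ G(t,0), t ↦ G(0,t), and t ↦ G(t,t) are all differentiable at 0. Then the derivative at 0 of t ↦ G(t,t) equals the derivative at 0 of t ↦ G(t,0) plus the derivative at 0 of t ↦ G(0,t). -/

import Mathlib

/-- For a concave G : ℝ² → ℝ, if t ↦ G(t,0), t ↦ G(0,t) and t ↦ G(t,t) are
differentiable at 0, the derivative of the diagonal is the sum of the two partial
derivatives. -/
theorem stmt_3 (T : ℝ → ℝ) (hT : ConcaveOn ℝ Set.univ T)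
    (G : ℝ × ℝ → ℝ) (hG : ConcaveOn ℝ Set.univ G)
    (d₁ d₂ d₃ : ℝ)
    (h₁ : HasDerivAt (fun t : ℝ => G (t, 0)) d₁ 0)
    (h₂ : HasDerivAt (fun t : ℝ => G (0, t)) d₂ 0)
    (h₃ : HasDerivAt (fun t : ℝ => G (t, t)) d₃ 0) :
    d₃ = d₁ + d₂ := by
  set h : ℝ → ℝ := fun t => G (t, t) - ((1/2) * G (2*t, 0) + (1/2) * G (0, 2*t)) with hh
  have hinner : HasDerivAt (fun t : ℝ => 2 * t) 2 0 := by
    simpa using (hasDerivAt_id (0:ℝ)).const_mul 2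
  have hA : HasDerivAt (fun t : ℝ => G (2*t, 0)) (d₁ * 2) 0 := by
    have := HasDerivAt.comp (0:ℝ) (h₂ := fun s : ℝ => G (s, 0)) (by simpa using h₁) hinner
    simpa [Function.comp_def] using this
  have hB : HasDerivAt (fun t : ℝ => G (0, 2*t)) (d₂ * 2) 0 := by
    have := HasDerivAt.comp (0:ℝ) (h₂ := fun s : ℝ => G (0, s)) (by simpa using h₂) hinner
    simpa [Function.comp_def] using this
  have hd : HasDerivAt h (d₃ - ((1/2) * (d₁ * 2) + (1/2) * (d₂ * 2))) 0 :=
    h₃.sub (((hA.const_mul (1/2))).add ((hB.const_mul (1/2))))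
  have hmin : IsLocalMin h 0 := by
    apply IsMinOn.isLocalMin (s := Set.univ) _ Filter.univ_mem
    intro t _
    have hc := hG.2 (Set.mem_univ ((2*t, 0) : ℝ × ℝ)) (Set.mem_univ ((0, 2*t) : ℝ × ℝ))
      (by norm_num : (0:ℝ) ≤ 1/2) (by norm_num : (0:ℝ) ≤ 1/2) (by norm_num)
    have hpt : ((1/2 : ℝ) • ((2*t, 0) : ℝ × ℝ) + (1/2 : ℝ) • ((0, 2*t) : ℝ × ℝ)) = (t, t) := by
      simp [Prod.ext_iff]
    rw [hpt] at hc
    simp only [h, smul_eq_mul] at *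
    simp only [Set.mem_setOf_eq]
    nlinarith [hc]
  have := hmin.hasDerivAt_eq_zero hd
  linarith
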